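/- The Hausdorff dimension of the Minkowski–Stieltjes measure μ is strictly greater than 1/2. -/

import Mathlib

open MeasureTheory Set
open scoped ENNReal

noncomputable def gaussMap (x : ℝ) : ℝ := if x = 0 then 0 else Int.fract x⁻¹

noncomputable def cfDigit (k : ℕ) (x : ℝ) : ℕ := ⌊(gaussMap^[k] x)⁻¹⌋₊

noncomputable def cfSum (n : ℕ) (x : ℝ) : ℕ := ∑ i ∈ Finset.range n, cfDigit i x

noncomputable def mink (x : ℝ) : ℝ :=
  ∑' k : ℕ, if gaussMap^[k] x = 0 then 0 else
    (-1 : ℝ) ^ k * (2 : ℝ) ^ ((1 : ℤ) - (cfSum (k + 1) x : ℤ))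

noncomputable def minkS (x : ℝ) (k : ℕ) : ℝ :=
  if gaussMap^[k] x = 0 then 0 else
    (-1 : ℝ) ^ k * (2 : ℝ) ^ ((1 : ℤ) - (cfSum (k + 1) x : ℤ))

lemma mink_eq_tsum (x : ℝ) : mink x = ∑' k, minkS x k := rfl

lemma gaussMap_zero : gaussMap 0 = 0 := by simp [gaussMap]

lemma gaussMap_mem_Ico (x : ℝ) : gaussMap x ∈ Ico (0:ℝ) 1 := by
  unfold gaussMap
  split
  · simp
  · exact ⟨Int.fract_nonneg _, Int.fract_lt_one _⟩

lemma iterate_mem_Ico (x : ℝ) (k : ℕ) (hk : 1 ≤ k) : gaussMap^[k] x ∈ Ico (0:ℝ) 1 := by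
  cases k with
  | zero => omega
  | succ n => rw [Function.iterate_succ_apply']; exact gaussMap_mem_Ico _

lemma iterate_gauss_zero (m : ℕ) : gaussMap^[m] (0:ℝ) = 0 := by
  induction m with
  | zero => rfl
  | succ n ih => rw [Function.iterate_succ_apply', ih, gaussMap_zero]

lemma iterate_zero_absorb {x : ℝ} {i k : ℕ} (hik : i ≤ k) (h : gaussMap^[i] x = 0) :
    gaussMap^[k] x = 0 := by
  obtain ⟨m, rfl⟩ := Nat.exists_eq_add_of_le hik
  rw [add_comm, Function.iterate_add_apply, h]
  exact iterate_gauss_zero m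

lemma cfDigit_pos {x : ℝ} {k : ℕ} (hx : x ∈ Icc (0:ℝ) 1) (h : gaussMap^[k] x ≠ 0) :
    1 ≤ cfDigit k x := by
  have hy : gaussMap^[k] x ∈ Icc (0:ℝ) 1 := by
    cases k with
    | zero => exact hx
    | succ n =>
      have := iterate_mem_Ico x (n+1) (Nat.succ_le_succ (Nat.zero_le n))
      exact ⟨this.1, this.2.le⟩
  have hy0 : 0 < gaussMap^[k] x := lt_of_le_of_ne hy.1 (Ne.symm h)
  have h1 : (1:ℝ) ≤ (gaussMap^[k] x)⁻¹ := (one_le_inv₀ hy0).mpr hy.2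
  exact Nat.le_floor (by exact_mod_cast h1)

lemma cfSum_ge {x : ℝ} {k : ℕ} (hx : x ∈ Icc (0:ℝ) 1) (h : gaussMap^[k] x ≠ 0) :
    k + 1 ≤ cfSum (k+1) x := by
  unfold cfSum
  calc k + 1 = ∑ _i ∈ Finset.range (k+1), 1 := by simp
  _ ≤ ∑ i ∈ Finset.range (k+1), cfDigit i x := by
      apply Finset.sum_le_sum
      intro i hi
      exact cfDigit_pos hx (fun h0 => h (iterate_zero_absorb (Nat.le_of_lt_succ (Finset.mem_range.mp hi)) h0))

lemma abs_minkS_le {x : ℝ} (hx : x ∈ Icc (0:ℝ) 1) (k : ℕ) : |minkS x k| ≤ (2⁻¹ : ℝ)^k := by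
  unfold minkS
  split
  · simp only [abs_zero]; positivity
  · rename_i h
    rw [abs_mul, abs_pow, abs_neg, abs_one, one_pow, one_mul]
    rw [abs_of_pos (by positivity)]
    have h1 : (1 : ℤ) - (cfSum (k+1) x : ℤ) ≤ -(k:ℤ) := by
      have := cfSum_ge hx h
      omega
    calc (2:ℝ) ^ ((1 : ℤ) - (cfSum (k + 1) x : ℤ)) ≤ (2:ℝ) ^ (-(k:ℤ)) :=
          zpow_le_zpow_right₀ one_le_two h1
    _ = (2⁻¹:ℝ)^k := by rw [zpow_neg, zpow_natCast, inv_pow]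

lemma summable_minkS {x : ℝ} (hx : x ∈ Icc (0:ℝ) 1) : Summable (minkS x) := by
  apply Summable.of_abs
  apply Summable.of_nonneg_of_le (fun k => abs_nonneg _) (abs_minkS_le hx)
  exact summable_geometric_of_lt_one (by norm_num) (by norm_num)

lemma mink_zero : mink 0 = 0 := by
  rw [mink_eq_tsum]
  have : ∀ k, minkS 0 k = 0 := by
    intro k; unfold minkS; rw [if_pos (iterate_gauss_zero k)]
  simp [this]

lemma gaussMap_one : gaussMap 1 = 0 := by
  simp [gaussMap]

lemma mink_one : mink 1 = 1 := by
  rw [mink_eq_tsum]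
  rw [tsum_eq_single 0]
  · unfold minkS
    rw [if_neg (by norm_num)]
    have : cfSum 1 1 = 1 := by
      unfold cfSum cfDigit
      simp
    rw [this]; norm_num
  · intro k hk
    unfold minkS
    rw [if_pos]
    cases k with
    | zero => omega
    | succ n =>
      rw [Function.iterate_succ_apply, gaussMap_one]
      exact iterate_gauss_zero n

lemma gaussMap_half : gaussMap (1/2 : ℝ) = 0 := by
  unfold gaussMap
  rw [if_neg (by norm_num)]
  norm_num

lemma mink_half : mink (1/2 : ℝ) = 1/2 := by
  rw [mink_eq_tsum]
  rw [tsum_eq_single 0]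
  · unfold minkS
    rw [if_neg (by norm_num)]
    have : cfSum 1 (1/2) = 2 := by
      unfold cfSum cfDigit
      norm_num
    rw [this]; norm_num
  · intro k hk
    unfold minkS
    rw [if_pos]
    cases k with
    | zero => omega
    | succ n =>
      rw [Function.iterate_succ_apply, gaussMap_half]
      exact iterate_gauss_zero n

lemma mink_g {x : ℝ} (hx : x ∈ Icc (0:ℝ) 1) : mink (1/(1+x)) = 1 - mink x / 2 := by
  rcases eq_or_lt_of_le hx.2 with h1 | h1
  · subst h1; norm_num [mink_half, mink_one]
  -- now x ∈ [0,1)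
  have hx0 : (0:ℝ) ≤ x := hx.1
  have hpos : (0:ℝ) < 1 + x := by linarith
  set y : ℝ := 1/(1+x) with hy
  have hy0 : y ≠ 0 := by positivity
  have hyinv : y⁻¹ = 1 + x := by rw [hy]; field_simp
  have hgy : gaussMap y = x := by
    unfold gaussMap
    rw [if_neg hy0, hyinv, add_comm]
    rw [show (1:ℝ) = ((1:ℤ):ℝ) by norm_num, Int.fract_add_intCast]
    exact Int.fract_eq_self.mpr ⟨hx0, h1⟩
  have horb : ∀ k, gaussMap^[k+1] y = gaussMap^[k] x := by
    intro k; rw [Function.iterate_succ_apply, hgy]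
  have hd0 : cfDigit 0 y = 1 := by
    unfold cfDigit
    simp only [Function.iterate_zero, id_eq]
    rw [hyinv]
    rw [Nat.floor_eq_iff (by linarith)]
    constructor <;> push_cast <;> linarith
  have hdk : ∀ k, cfDigit (k+1) y = cfDigit k x := by
    intro k; unfold cfDigit; rw [horb]
  have hcs : ∀ k, cfSum (k+1) y = cfSum k x + 1 := by
    intro k
    unfold cfSum
    rw [Finset.sum_range_succ']
    simp only [hdk, hd0]
  have hS0 : minkS y 0 = 1 := by
    unfold minkS
    rw [if_neg (by simpa using hy0)]
    have : cfSum 1 y = 1 := by rw [hcs 0]; unfold cfSum; simp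
    rw [this]; norm_num
  have hSk : ∀ k, minkS y (k+1) = -(2⁻¹) * minkS x k := by
    intro k
    unfold minkS
    rw [horb]
    split
    · ring
    · rename_i h
      rw [hcs (k+1)]
      push_cast
      rw [show (1:ℤ) - ((cfSum (k+1) x : ℤ) + 1) = (1 - (cfSum (k+1) x : ℤ)) - 1 by ring]
      rw [zpow_sub_one₀ (by norm_num)]
      ring
  have hyIcc : y ∈ Icc (0:ℝ) 1 := by
    constructor
    · positivity
    · rw [hy]; rw [div_le_one hpos]; linarith
  have hsum := summable_minkS hyIcc
  rw [mink_eq_tsum, hsum.tsum_eq_zero_add, hS0]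
  have : ∑' k, minkS y (k+1) = ∑' k, -(2⁻¹) * minkS x k := by
    congr 1; ext k; exact hSk k
  rw [this, tsum_mul_left, ← mink_eq_tsum]
  ring

lemma mink_f {x : ℝ} (hx : x ∈ Icc (0:ℝ) 1) : mink (x/(1+x)) = mink x / 2 := by
  rcases eq_or_lt_of_le hx.1 with h0 | h0
  · rw [← h0]; norm_num [mink_zero]
  have hx1 : x ≤ 1 := hx.2
  have hpos : (0:ℝ) < 1 + x := by linarith
  set y : ℝ := x/(1+x) with hy
  have hy0 : y ≠ 0 := by positivity
  have hyinv : y⁻¹ = x⁻¹ + 1 := by rw [hy]; field_simp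
  have hgy : gaussMap y = gaussMap x := by
    unfold gaussMap
    rw [if_neg hy0, if_neg (ne_of_gt h0), hyinv]
    rw [show (1:ℝ) = ((1:ℤ):ℝ) by norm_num, Int.fract_add_intCast]
  have horb : ∀ k, gaussMap^[k+1] y = gaussMap^[k+1] x := by
    intro k; rw [Function.iterate_succ_apply, Function.iterate_succ_apply, hgy]
  have hd0 : cfDigit 0 y = cfDigit 0 x + 1 := by
    unfold cfDigit
    simp only [Function.iterate_zero, id_eq]
    rw [hyinv, Nat.floor_add_one (by positivity)]
  have hdk : ∀ k, cfDigit (k+1) y = cfDigit (k+1) x := by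
    intro k; unfold cfDigit; rw [horb]
  have hcs : ∀ k, cfSum (k+1) y = cfSum (k+1) x + 1 := by
    intro k
    unfold cfSum
    rw [Finset.sum_range_succ', Finset.sum_range_succ' _ (k)]
    simp only [hdk, hd0]
    ring
  have hcond : ∀ k, (gaussMap^[k] y = 0 ↔ gaussMap^[k] x = 0) := by
    intro k
    cases k with
    | zero =>
      simp only [Function.iterate_zero, id_eq]
      constructor
      · intro h; exact absurd h hy0
      · intro h; exact absurd h (ne_of_gt h0)
    | succ n => rw [horb]
  have hSk : ∀ k, minkS y k = 2⁻¹ * minkS x k := by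
    intro k
    unfold minkS
    by_cases h : gaussMap^[k] x = 0
    · rw [if_pos ((hcond k).mpr h), if_pos h]; ring
    · rw [if_neg (fun hh => h ((hcond k).mp hh)), if_neg h, hcs k]
      push_cast
      rw [show (1:ℤ) - ((cfSum (k+1) x : ℤ) + 1) = (1 - (cfSum (k+1) x : ℤ)) - 1 by ring]
      rw [zpow_sub_one₀ (by norm_num)]
      ring
  rw [mink_eq_tsum]
  have : ∑' k, minkS y k = ∑' k, 2⁻¹ * minkS x k := by
    congr 1; ext k; exact hSk k
  rw [this, tsum_mul_left, ← mink_eq_tsum]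
  ring

noncomputable def q0 (x : ℝ) : ℝ := x/(1+2*x)
noncomputable def q1 (x : ℝ) : ℝ := 1/(2+x)
noncomputable def q2 (x : ℝ) : ℝ := (1+x)/(2+x)
noncomputable def q3 (x : ℝ) : ℝ := (1+x)/(1+2*x)

lemma f_mem {x : ℝ} (hx : x ∈ Icc (0:ℝ) 1) : x/(1+x) ∈ Icc (0:ℝ) 1 := by
  obtain ⟨h0, h1⟩ := hx
  constructor
  · positivity
  · rw [div_le_one (by linarith)]; linarith

lemma g_mem {x : ℝ} (hx : x ∈ Icc (0:ℝ) 1) : 1/(1+x) ∈ Icc (0:ℝ) 1 := by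
  obtain ⟨h0, h1⟩ := hx
  constructor
  · positivity
  · rw [div_le_one (by linarith)]; linarith

lemma q0_mem {x : ℝ} (hx : x ∈ Icc (0:ℝ) 1) : q0 x ∈ Icc (0:ℝ) 1 := by
  obtain ⟨h0, h1⟩ := hx
  constructor
  · unfold q0; positivity
  · unfold q0; rw [div_le_one (by linarith)]; linarith

lemma q1_mem {x : ℝ} (hx : x ∈ Icc (0:ℝ) 1) : q1 x ∈ Icc (0:ℝ) 1 := by
  obtain ⟨h0, h1⟩ := hx
  constructor
  · unfold q1; positivity
  · unfold q1; rw [div_le_one (by linarith)]; linarith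

lemma q2_mem {x : ℝ} (hx : x ∈ Icc (0:ℝ) 1) : q2 x ∈ Icc (0:ℝ) 1 := by
  obtain ⟨h0, h1⟩ := hx
  constructor
  · unfold q2; positivity
  · unfold q2; rw [div_le_one (by linarith)]; linarith

lemma q3_mem {x : ℝ} (hx : x ∈ Icc (0:ℝ) 1) : q3 x ∈ Icc (0:ℝ) 1 := by
  obtain ⟨h0, h1⟩ := hx
  constructor
  · unfold q3; positivity
  · unfold q3; rw [div_le_one (by linarith)]; linarith

lemma mink_q0 {x : ℝ} (hx : x ∈ Icc (0:ℝ) 1) : mink (q0 x) = mink x / 4 := by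
  have hne : (1:ℝ) + x ≠ 0 := by have := hx.1; positivity
  have h : q0 x = (x/(1+x))/(1+x/(1+x)) := by
    unfold q0; field_simp; try ring
  rw [h, mink_f (f_mem hx), mink_f hx]; ring

lemma mink_q1 {x : ℝ} (hx : x ∈ Icc (0:ℝ) 1) : mink (q1 x) = 1/2 - mink x / 4 := by
  have hne : (1:ℝ) + x ≠ 0 := by have := hx.1; positivity
  have h : q1 x = (1/(1+x))/(1+1/(1+x)) := by
    unfold q1; field_simp; try ring
  rw [h, mink_f (g_mem hx), mink_g hx]; ring

lemma mink_q2 {x : ℝ} (hx : x ∈ Icc (0:ℝ) 1) : mink (q2 x) = 1/2 + mink x / 4 := by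
  have hne : (1:ℝ) + x ≠ 0 := by have := hx.1; positivity
  have h : q2 x = 1/(1+1/(1+x)) := by
    unfold q2; rw [one_div (1+1/(1+x))]; field_simp; try ring
  rw [h, mink_g (g_mem hx), mink_g hx]; ring

lemma mink_q3 {x : ℝ} (hx : x ∈ Icc (0:ℝ) 1) : mink (q3 x) = 1 - mink x / 4 := by
  have hne : (1:ℝ) + x ≠ 0 := by have := hx.1; positivity
  have h : q3 x = 1/(1+x/(1+x)) := by
    unfold q3; rw [one_div (1+x/(1+x))]; field_simp; try ring
  rw [h, mink_g (f_mem hx), mink_f hx]; ring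

lemma q0_exp {u v d : ℝ} (hu : u ∈ Icc (0:ℝ) 1) (hv : v ∈ Icc (0:ℝ) 1) (hd : 0 ≤ d)
    (h : u + d ≤ v) : q0 u + d/9 ≤ q0 v := by
  obtain ⟨hu0, hu1⟩ := hu; obtain ⟨hv0, hv1⟩ := hv
  have key : q0 v - q0 u = (v-u)/((1+2*u)*(1+2*v)) := by
    unfold q0; field_simp; try ring
  have h2 : (v-u)/9 ≤ (v-u)/((1+2*u)*(1+2*v)) := by
    apply div_le_div_of_nonneg_left (by linarith) (by nlinarith) (by nlinarith)
  have h3 : d/9 ≤ (v-u)/9 := by linarith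
  linarith

lemma q1_exp {u v d : ℝ} (hu : u ∈ Icc (0:ℝ) 1) (hv : v ∈ Icc (0:ℝ) 1) (hd : 0 ≤ d)
    (h : u + d ≤ v) : q1 v + d/9 ≤ q1 u := by
  obtain ⟨hu0, hu1⟩ := hu; obtain ⟨hv0, hv1⟩ := hv
  have key : q1 u - q1 v = (v-u)/((2+u)*(2+v)) := by
    unfold q1; field_simp; try ring
  have h2 : (v-u)/9 ≤ (v-u)/((2+u)*(2+v)) := by
    apply div_le_div_of_nonneg_left (by linarith) (by nlinarith) (by nlinarith)
  have h3 : d/9 ≤ (v-u)/9 := by linarith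
  linarith

lemma q2_exp {u v d : ℝ} (hu : u ∈ Icc (0:ℝ) 1) (hv : v ∈ Icc (0:ℝ) 1) (hd : 0 ≤ d)
    (h : u + d ≤ v) : q2 u + d/9 ≤ q2 v := by
  obtain ⟨hu0, hu1⟩ := hu; obtain ⟨hv0, hv1⟩ := hv
  have key : q2 v - q2 u = (v-u)/((2+u)*(2+v)) := by
    unfold q2; field_simp; try ring
  have h2 : (v-u)/9 ≤ (v-u)/((2+u)*(2+v)) := by
    apply div_le_div_of_nonneg_left (by linarith) (by nlinarith) (by nlinarith)
  have h3 : d/9 ≤ (v-u)/9 := by linarith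
  linarith

lemma q3_exp {u v d : ℝ} (hu : u ∈ Icc (0:ℝ) 1) (hv : v ∈ Icc (0:ℝ) 1) (hd : 0 ≤ d)
    (h : u + d ≤ v) : q3 v + d/9 ≤ q3 u := by
  obtain ⟨hu0, hu1⟩ := hu; obtain ⟨hv0, hv1⟩ := hv
  have key : q3 u - q3 v = (v-u)/((1+2*u)*(1+2*v)) := by
    unfold q3; field_simp; try ring
  have h2 : (v-u)/9 ≤ (v-u)/((1+2*u)*(1+2*v)) := by
    apply div_le_div_of_nonneg_left (by linarith) (by nlinarith) (by nlinarith)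
  have h3 : d/9 ≤ (v-u)/9 := by linarith
  linarith

lemma partition (n : ℕ) : ∃ t : ℕ → ℝ,
    t 0 = 0 ∧ t (4^n) = 1 ∧
    (∀ i, i ≤ 4^n → t i ∈ Icc (0:ℝ) 1) ∧
    (∀ i, i ≤ 4^n → mink (t i) = (i:ℝ) / 4^n) ∧
    (∀ i, i + 1 ≤ 4^n → t i + (9:ℝ)⁻¹^n ≤ t (i+1)) := by
  induction n with
  | zero =>
    refine ⟨fun i => if i = 0 then 0 else 1, by simp, by norm_num, ?_, ?_, ?_⟩
    · intro i hi
      simp only [pow_zero] at hi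
      interval_cases i <;> simp <;> norm_num
    · intro i hi
      simp only [pow_zero] at hi
      interval_cases i <;> simp [mink_zero, mink_one]
    · intro i hi
      simp only [pow_zero] at hi
      have : i = 0 := by omega
      subst this
      norm_num
  | succ n ih =>
    obtain ⟨t, ht0, ht1, htm, htv, htg⟩ := ih
    have hN : 1 ≤ 4^n := Nat.one_le_pow n 4 (by norm_num)
    have hA : 4^(n+1) = 4*4^n := by rw [pow_succ]; ring
    have hb1 : q0 (t (4^n)) = q1 (t (4^n)) := by rw [ht1]; norm_num [q0, q1]
    have hb2 : q1 (t 0) = q2 (t 0) := by rw [ht0]; norm_num [q1, q2]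
    have hb3 : q2 (t (4^n)) = q3 (t (4^n)) := by rw [ht1]; norm_num [q2, q3]
    have pos : (0:ℝ) ≤ 9⁻¹^n := by positivity
    have h4ne : ((4:ℝ))^n ≠ 0 := by positivity
    refine ⟨fun i => if i ≤ 4^n then q0 (t i) else if i ≤ 2*4^n then q1 (t (2*4^n - i))
      else if i ≤ 3*4^n then q2 (t (i - 2*4^n)) else q3 (t (4*4^n - i)), ?_, ?_, ?_, ?_, ?_⟩
    · beta_reduce
      rw [if_pos (by omega), ht0]
      norm_num [q0]
    · beta_reduce
      rw [hA]
      rw [if_neg (by omega), if_neg (by omega), if_neg (by omega)]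
      rw [Nat.sub_self, ht0]
      norm_num [q3]
    · intro i hi
      rw [hA] at hi
      beta_reduce
      split_ifs with h1 h2 h3
      · exact q0_mem (htm i h1)
      · exact q1_mem (htm _ (by omega))
      · exact q2_mem (htm _ (by omega))
      · exact q3_mem (htm _ (by omega))
    · intro i hi
      rw [hA] at hi
      beta_reduce
      split_ifs with h1 h2 h3
      · rw [mink_q0 (htm i h1), htv i h1, pow_succ]
        field_simp
      · rw [mink_q1 (htm _ (by omega)), htv _ (by omega)]
        rw [Nat.cast_sub (by omega)]
        push_cast
        rw [pow_succ]
        field_simp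
        ring
      · rw [mink_q2 (htm _ (by omega)), htv _ (by omega)]
        rw [Nat.cast_sub (by omega)]
        push_cast
        rw [pow_succ]
        field_simp
        ring
      · rw [mink_q3 (htm _ (by omega)), htv _ (by omega)]
        rw [Nat.cast_sub (by omega)]
        push_cast
        rw [pow_succ]
        field_simp
        ring
    · intro i hi
      rw [hA] at hi
      have h9 : (9:ℝ)⁻¹^(n+1) = 9⁻¹^n/9 := by rw [pow_succ]; ring
      beta_reduce
      rw [h9]
      rcases Nat.lt_or_ge i (4^n) with c1 | c1
      · -- i+1 ≤ 4^n : both block 1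
        rw [if_pos (by omega : i ≤ 4^n), if_pos (by omega : i + 1 ≤ 4^n)]
        exact q0_exp (htm i (by omega)) (htm (i+1) (by omega)) pos (htg i (by omega))
      rcases Nat.lt_or_ge i (2*4^n) with c2 | c2
      · rcases Nat.eq_or_lt_of_le c1 with c1e | c1s
        · -- i = 4^n : boundary 1-2
          rw [if_pos (by omega : i ≤ 4^n), if_neg (by omega : ¬ i + 1 ≤ 4^n),
            if_pos (by omega : i + 1 ≤ 2*4^n)]
          have hie : i = 4^n := by omega
          subst hie
          rw [hb1, show 2*4^n - (4^n+1) = 4^n - 1 from by omega]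
          apply q1_exp (htm _ (by omega)) (htm _ (by omega)) pos
          have := htg (4^n-1) (by omega)
          rwa [show 4^n - 1 + 1 = 4^n from by omega] at this
        · -- 4^n < i, i+1 ≤ 2*4^n : both block 2
          rw [if_neg (by omega : ¬ i ≤ 4^n), if_pos (by omega : i ≤ 2*4^n),
            if_neg (by omega : ¬ i + 1 ≤ 4^n), if_pos (by omega : i + 1 ≤ 2*4^n)]
          rw [show 2*4^n - (i+1) = 2*4^n - i - 1 from by omega]
          apply q1_exp (htm _ (by omega)) (htm _ (by omega)) pos
          have := htg (2*4^n - i - 1) (by omega)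
          rwa [show 2*4^n - i - 1 + 1 = 2*4^n - i from by omega] at this
      rcases Nat.lt_or_ge i (3*4^n) with c3 | c3
      · rcases Nat.eq_or_lt_of_le c2 with c2e | c2s
        · -- i = 2*4^n : boundary 2-3
          rw [if_neg (by omega : ¬ i ≤ 4^n), if_pos (by omega : i ≤ 2*4^n),
            if_neg (by omega : ¬ i + 1 ≤ 4^n), if_neg (by omega : ¬ i + 1 ≤ 2*4^n),
            if_pos (by omega : i + 1 ≤ 3*4^n)]
          rw [show 2*4^n - i = 0 from by omega, hb2, show i + 1 - 2*4^n = 1 from by omega]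
          exact q2_exp (htm 0 (by omega)) (htm 1 (by omega)) pos
            (by have := htg 0 (by omega); rwa [ht0, zero_add] at this ⊢)
        · -- both block 3
          rw [if_neg (by omega : ¬ i ≤ 4^n), if_neg (by omega : ¬ i ≤ 2*4^n),
            if_pos (by omega : i ≤ 3*4^n),
            if_neg (by omega : ¬ i + 1 ≤ 4^n), if_neg (by omega : ¬ i + 1 ≤ 2*4^n),
            if_pos (by omega : i + 1 ≤ 3*4^n)]
          rw [show i + 1 - 2*4^n = i - 2*4^n + 1 from by omega]
          exact q2_exp (htm _ (by omega)) (htm _ (by omega)) pos (htg (i - 2*4^n) (by omega))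
      rcases Nat.eq_or_lt_of_le c3 with c3e | c3s
      · -- i = 3*4^n : boundary 3-4
        rw [if_neg (by omega : ¬ i ≤ 4^n), if_neg (by omega : ¬ i ≤ 2*4^n),
          if_pos (by omega : i ≤ 3*4^n),
          if_neg (by omega : ¬ i + 1 ≤ 4^n), if_neg (by omega : ¬ i + 1 ≤ 2*4^n),
          if_neg (by omega : ¬ i + 1 ≤ 3*4^n)]
        rw [show i - 2*4^n = 4^n from by omega, hb3, show 4*4^n - (i+1) = 4^n - 1 from by omega]
        apply q3_exp (htm _ (by omega)) (htm _ (by omega)) pos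
        have := htg (4^n - 1) (by omega)
        rwa [show 4^n - 1 + 1 = 4^n from by omega] at this
      · -- both block 4
        rw [if_neg (by omega : ¬ i ≤ 4^n), if_neg (by omega : ¬ i ≤ 2*4^n),
          if_neg (by omega : ¬ i ≤ 3*4^n),
          if_neg (by omega : ¬ i + 1 ≤ 4^n), if_neg (by omega : ¬ i + 1 ≤ 2*4^n),
          if_neg (by omega : ¬ i + 1 ≤ 3*4^n)]
        rw [show 4*4^n - (i+1) = 4*4^n - i - 1 from by omega]
        apply q3_exp (htm _ (by omega)) (htm _ (by omega)) pos
        have := htg (4*4^n - i - 1) (by omega)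
        rwa [show 4*4^n - i - 1 + 1 = 4*4^n - i from by omega] at this

lemma mass_bound (μ : Measure ℝ) [IsProbabilityMeasure μ]
    (hdist : ∀ x ∈ Icc (0 : ℝ) 1, μ (Icc 0 x) = ENNReal.ofReal (mink x))
    (n : ℕ) (u v : ℝ) (hu : 0 ≤ u) (hv : v ≤ 1) (huv : u ≤ v)
    (hlen : v - u ≤ (9:ℝ)⁻¹^n) :
    μ (Icc u v) ≤ ENNReal.ofReal (3 / 4^n) := by
  classical
  obtain ⟨t, ht0, ht1, htm, htv, htg⟩ := partition n
  have h9pos : (0:ℝ) < 9⁻¹^n := by positivity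
  have hmono : ∀ a b : ℕ, a ≤ b → b ≤ 4^n → t a ≤ t b := by
    have step : ∀ k a : ℕ, a + k ≤ 4^n → t a ≤ t (a+k) := by
      intro k
      induction k with
      | zero => intro a _; simp
      | succ m ih =>
        intro a ha
        have h1 := ih a (by omega)
        have h2 := htg (a+m) (by omega)
        have : t (a+m) ≤ t (a+m+1) := by linarith
        calc t a ≤ t (a+m) := h1
        _ ≤ t (a + (m+1)) := by rw [show a + (m+1) = a+m+1 from by omega]; exact this
    intro a b hab hb
    have := step (b-a) a (by omega)
    rwa [show a + (b-a) = b from by omega] at this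
  set P : ℕ → Prop := fun i => t i ≤ u with hP
  have hP0 : P 0 := by rw [hP]; simp [ht0, hu]
  set j := Nat.findGreatest P (4^n) with hj
  have hj4 : j ≤ 4^n := Nat.findGreatest_le _
  have hju : t j ≤ u := Nat.findGreatest_spec (Nat.zero_le _) hP0
  have hnext : ∀ m, j < m → m ≤ 4^n → u < t m := by
    intro m hm hm4
    have := Nat.findGreatest_is_greatest (hj ▸ hm) hm4
    rw [hP] at this
    exact lt_of_not_ge this
  set k := min (j+2) (4^n) with hk
  have hk4 : k ≤ 4^n := min_le_right _ _
  have hkj : k ≤ j + 2 := min_le_left _ _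
  have hvk : v ≤ t k := by
    rcases le_or_gt (j+2) (4^n) with hc | hc
    · rw [hk, min_eq_left hc]
      have h1 : u < t (j+1) := hnext (j+1) (by omega) (by omega)
      have h2 := htg (j+1) (by omega)
      linarith
    · rw [hk, min_eq_right (by omega)]
      rw [ht1]; exact hv
  rcases Nat.eq_zero_or_pos j with hj0 | hj0
  · -- j = 0, k ≤ 2
    have hsub : Icc u v ⊆ Icc 0 (t k) := by
      intro x hx
      exact ⟨le_trans hu hx.1, le_trans hx.2 hvk⟩
    calc μ (Icc u v) ≤ μ (Icc 0 (t k)) := measure_mono hsub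
    _ = ENNReal.ofReal (mink (t k)) := hdist _ (htm k hk4)
    _ = ENNReal.ofReal ((k:ℝ)/4^n) := by rw [htv k hk4]
    _ ≤ ENNReal.ofReal (3/4^n) := by
        apply ENNReal.ofReal_le_ofReal
        apply div_le_div_of_nonneg_right ?_ (by positivity)
        have hk2 : k ≤ 2 := by omega
        have : (k:ℝ) ≤ 2 := by exact_mod_cast hk2
        linarith
  · -- j ≥ 1
    have hj1 : j - 1 + 1 = j := by omega
    have hlt : t (j-1) < u := by
      have := htg (j-1) (by omega)
      rw [hj1] at this
      linarith
    have hsub : Icc u v ⊆ Ioc (t (j-1)) (t k) := by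
      intro x hx
      exact ⟨lt_of_lt_of_le hlt hx.1, le_trans hx.2 hvk⟩
    have hjk : t (j-1) ≤ t k := hmono (j-1) k (by omega) hk4
    have hsplit : Icc (0:ℝ) (t (j-1)) ∪ Ioc (t (j-1)) (t k) = Icc 0 (t k) :=
      Icc_union_Ioc_eq_Icc (htm (j-1) (by omega)).1 hjk
    have hdisj : Disjoint (Icc (0:ℝ) (t (j-1))) (Ioc (t (j-1)) (t k)) := by
      apply Set.disjoint_left.mpr
      intro x hx1 hx2
      exact absurd hx1.2 (not_le.mpr hx2.1)
    have hadd : μ (Icc 0 (t (j-1))) + μ (Ioc (t (j-1)) (t k)) = μ (Icc 0 (t k)) := by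
      rw [← measure_union hdisj measurableSet_Ioc, hsplit]
    have hj1r : (1:ℝ) ≤ (j:ℝ) := by exact_mod_cast hj0
    have hIoc : μ (Ioc (t (j-1)) (t k))
        ≤ ENNReal.ofReal (3/4^n) := by
      have hfin : μ (Icc (0:ℝ) (t (j-1))) ≠ ⊤ := measure_ne_top μ _
      have h1 : μ (Icc (0:ℝ) (t (j-1))) = ENNReal.ofReal (((j:ℝ)-1)/4^n) := by
        rw [hdist _ (htm (j-1) (by omega)), htv (j-1) (by omega)]
        congr 1
        rw [Nat.cast_sub (by omega)]
        norm_num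
      have h2 : μ (Icc (0:ℝ) (t k)) = ENNReal.ofReal ((k:ℝ)/4^n) := by
        rw [hdist _ (htm k hk4), htv k hk4]
      have h3 : μ (Ioc (t (j-1)) (t k)) = ENNReal.ofReal ((k:ℝ)/4^n) - ENNReal.ofReal (((j:ℝ)-1)/4^n) := by
        rw [← h2, ← hadd, h1]
        rw [ENNReal.add_sub_cancel_left (by rw [h1] at hfin; exact hfin)]
      rw [h3]
      apply tsub_le_iff_left.mpr
      rw [← ENNReal.ofReal_add (div_nonneg (by linarith) (by positivity)) (by positivity)]
      apply ENNReal.ofReal_le_ofReal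
      have : (k:ℝ) ≤ (j:ℝ) + 2 := by exact_mod_cast hkj
      rw [← add_div]
      apply div_le_div_of_nonneg_right ?_ (by positivity)
      linarith
    exact le_trans (measure_mono hsub) (le_trans (le_of_eq rfl) hIoc)

lemma rpow_compare (m : ℕ) : (4:ℝ)⁻¹^m ≤ ((9:ℝ)⁻¹^m) ^ ((3:ℝ)/5) := by
  have ha : (0:ℝ) ≤ 9⁻¹^m := by positivity
  have hb : (0:ℝ) ≤ ((9:ℝ)⁻¹^m) ^ ((3:ℝ)/5) := Real.rpow_nonneg ha _
  rw [← pow_le_pow_iff_left₀ (by positivity) hb (by norm_num : (5:ℕ) ≠ 0)]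
  have h5 : (((9:ℝ)⁻¹^m) ^ ((3:ℝ)/5))^(5:ℕ) = ((9:ℝ)⁻¹^m)^(3:ℕ) := by
    rw [← Real.rpow_natCast (((9:ℝ)⁻¹^m) ^ ((3:ℝ)/5)) 5, ← Real.rpow_mul ha]
    have : (3:ℝ)/5 * ((5:ℕ):ℝ) = ((3:ℕ):ℝ) := by norm_num
    rw [this, Real.rpow_natCast]
  rw [h5, ← pow_mul, ← pow_mul, show m*5 = 5*m from by ring, show m*3 = 3*m from by ring,
    pow_mul, pow_mul]
  apply pow_le_pow_left₀ (by positivity)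
  norm_num

/-- The Hausdorff dimension of the Minkowski–Stieltjes measure is `> 1/2`. -/
theorem minkMeasure_dimH_gt_half (μ : Measure ℝ) [IsProbabilityMeasure μ]
    (hdist : ∀ x ∈ Icc (0 : ℝ) 1, μ (Icc 0 x) = ENNReal.ofReal (mink x))
    (hsupp : μ (Icc (0 : ℝ) 1) = 1) :
    (2⁻¹ : ℝ≥0∞) < sInf {d : ℝ≥0∞ | ∃ A : Set ℝ, MeasurableSet A ∧ μ A = 1 ∧ dimH A = d} := by
  classical
  set D : NNReal := 3/5 with hD
  have hcompl : μ (Icc (0:ℝ) 1)ᶜ = 0 := by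
    rw [measure_compl measurableSet_Icc (measure_ne_top μ _), hsupp, measure_univ, tsub_self]
  have hIcc : ∀ (n : ℕ) (a b : ℝ), b - a ≤ (9:ℝ)⁻¹^n → μ (Icc a b) ≤ ENNReal.ofReal (3/4^n) := by
    intro n a b hab
    rw [← measure_inter_conull hcompl, Icc_inter_Icc]
    rcases le_or_gt (max a 0) (min b 1) with h | h
    · apply mass_bound μ hdist n _ _ (le_max_right a 0) (min_le_right b 1) h
      have h1 := le_max_left a 0
      have h2 := min_le_left b 1
      linarith
    · rw [Icc_eq_empty (not_le.mpr h)]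
      simp
  have hcoe : (D : ℝ) = (3:ℝ)/5 := by rw [hD]; push_cast; norm_num
  have hfrost : (12⁻¹ : ℝ≥0∞) • μ ≤ μH[(D : ℝ)] := by
    apply Measure.le_hausdorffMeasure _ _ (ENNReal.ofReal (9⁻¹))
      (by rw [ENNReal.ofReal_pos]; norm_num)
    intro s hs
    rw [Measure.smul_apply, smul_eq_mul]
    rcases eq_empty_or_nonempty s with rfl | hne
    · simp
    have hb : Bornology.IsBounded s :=
      Metric.isBounded_iff_ediam_ne_top.mpr (ne_top_of_le_ne_top ENNReal.ofReal_ne_top hs)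
    have hdiam : Metric.ediam s = ENNReal.ofReal (sSup s - sInf s) := Real.ediam_eq hb
    set δ := sSup s - sInf s with hδ
    have hδ0 : 0 ≤ δ := sub_nonneg.mpr (Real.sInf_le_sSup s hb.bddBelow hb.bddAbove)
    have hδ9 : δ ≤ 9⁻¹ := by
      rw [hdiam] at hs
      exact (ENNReal.ofReal_le_ofReal_iff (by norm_num)).mp hs
    have hsubset : s ⊆ Icc (sInf s) (sSup s) := hb.subset_Icc_sInf_sSup
    rcases eq_or_lt_of_le hδ0 with hδe | hδpos
    · -- δ = 0
      have hμ0 : μ s = 0 := by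
        have hall : ∀ n : ℕ, μ s ≤ ENNReal.ofReal (3/4^n) := by
          intro n
          refine le_trans (measure_mono hsubset) (hIcc n _ _ ?_)
          have : (0:ℝ) < 9⁻¹^n := by positivity
          rw [← hδ, ← hδe]
          linarith
        have ht : Filter.Tendsto (fun n : ℕ => ENNReal.ofReal (3/4^n)) Filter.atTop (nhds 0) := by
          have h1 : Filter.Tendsto (fun n : ℕ => (3:ℝ)/4^n) Filter.atTop (nhds 0) := by
            have h2 := (tendsto_pow_atTop_nhds_zero_of_lt_one
              (by norm_num : (0:ℝ) ≤ 4⁻¹) (by norm_num : (4:ℝ)⁻¹ < 1)).const_mul (3:ℝ)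
            simpa [div_eq_mul_inv, inv_pow, mul_zero] using h2
          have := ENNReal.tendsto_ofReal h1
          simpa using this
        have := ge_of_tendsto ht (Filter.Eventually.of_forall hall)
        exact le_zero_iff.mp this
      rw [hμ0, mul_zero]
      exact zero_le
    · -- δ > 0
      obtain ⟨n₁, hn₁⟩ := exists_pow_lt_of_lt_one hδpos (by norm_num : (9:ℝ)⁻¹ < 1)
      have hex : ∃ m : ℕ, (9:ℝ)⁻¹^(m+1) < δ :=
        ⟨n₁, lt_of_le_of_lt (pow_le_pow_of_le_one (by norm_num) (by norm_num) (by omega)) hn₁⟩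
      set n₀ := Nat.find hex with hn₀
      have hfind : (9:ℝ)⁻¹^(n₀+1) < δ := Nat.find_spec hex
      have hδle : δ ≤ (9:ℝ)⁻¹^n₀ := by
        rcases Nat.eq_zero_or_pos n₀ with h0 | h0
        · rw [h0, pow_zero]; linarith
        · have := Nat.find_min hex (show n₀ - 1 < n₀ by omega)
          push_neg at this
          rwa [show n₀ - 1 + 1 = n₀ from by omega] at this
      have hμ : μ s ≤ ENNReal.ofReal (3/4^n₀) :=
        le_trans (measure_mono hsubset) (hIcc n₀ _ _ (by rw [← hδ]; linarith))
      have hreal : 12⁻¹ * (3/4^n₀) ≤ δ ^ ((3:ℝ)/5) := by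
        have h1 : (12:ℝ)⁻¹ * (3/4^n₀) = 4⁻¹^(n₀+1) := by
          rw [pow_succ]
          field_simp
          rw [mul_assoc, ← mul_pow]; norm_num
        rw [h1]
        calc (4:ℝ)⁻¹^(n₀+1) ≤ ((9:ℝ)⁻¹^(n₀+1)) ^ ((3:ℝ)/5) := rpow_compare (n₀+1)
        _ ≤ δ ^ ((3:ℝ)/5) := Real.rpow_le_rpow (by positivity) hfind.le (by norm_num)
      calc (12⁻¹ : ℝ≥0∞) * μ s ≤ 12⁻¹ * ENNReal.ofReal (3/4^n₀) := by
            exact mul_le_mul_right hμ _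
      _ = ENNReal.ofReal 12⁻¹ * ENNReal.ofReal (3/4^n₀) := by
            congr 1
            rw [ENNReal.ofReal_inv_of_pos (by norm_num)]
            norm_num
      _ = ENNReal.ofReal (12⁻¹ * (3/4^n₀)) := (ENNReal.ofReal_mul (by norm_num)).symm
      _ ≤ ENNReal.ofReal (δ ^ ((3:ℝ)/5)) := ENNReal.ofReal_le_ofReal hreal
      _ = ENNReal.ofReal δ ^ ((3:ℝ)/5) := (ENNReal.ofReal_rpow_of_pos hδpos).symm
      _ = Metric.ediam s ^ (D : ℝ) := by rw [hdiam, hcoe]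
  have hdim : ∀ A : Set ℝ, μ A = 1 → (D : ℝ≥0∞) ≤ dimH A := by
    intro A hA
    apply le_dimH_of_hausdorffMeasure_ne_zero
    have h2 := Measure.le_iff'.mp hfrost A
    rw [Measure.smul_apply, smul_eq_mul, hA, mul_one] at h2
    intro h0
    rw [h0] at h2
    simp at h2
  refine lt_of_lt_of_le (b := (D : ℝ≥0∞)) ?_ (le_sInf ?_)
  · show (2⁻¹ : ℝ≥0∞) < (D : ℝ≥0∞)
    have e1 : (D : ℝ≥0∞) = ENNReal.ofReal ((3:ℝ)/5) := by
      rw [← hcoe, ENNReal.ofReal_coe_nnreal]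
    have e2 : (2⁻¹ : ℝ≥0∞) = ENNReal.ofReal (1/2) := by
      rw [ENNReal.ofReal_div_of_pos (by norm_num), ENNReal.ofReal_one, ENNReal.ofReal_ofNat, one_div]
    rw [e1, e2]
    exact (ENNReal.ofReal_lt_ofReal_iff (by norm_num)).mpr (by norm_num)
  · rintro d ⟨A, hmA, hμA, rfl⟩
    exact hdim A hμA
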